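/- Let V be a finite-dimensional vector space over ℂ and let Z ⊆ End(V) be a commutative (unital) subalgebra such that every element of Z is a semisimple (diagonalizable) endomorphism. Then there exists a single element C ∈ Z such that every element of Z is a polynomial (with complex coefficients) in C; in particular the eigenspace decomposition of V with respect to C coincides with the joint eigenspace decomposition of V with respect to Z. -/

import Mathlib

noncomputable section

open Polynomial

lemma aux_monogenic {A : Type*} [CommRing A] [Algebra ℂ A] [Module.Finite ℂ A] [IsReduced A] :
    ∃ C : A, ∀ z : A, ∃ p : Polynomial ℂ, Polynomial.aeval C p = z := by
  classical
  have hart : IsArtinianRing A := isArtinian_of_tower ℂ inferInstance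
  have hfin : Finite {I : Ideal A | I.IsMaximal} := (IsArtinianRing.setOfPred_isMaximal_finite A).to_subtype
  set S := {I : Ideal A | I.IsMaximal} with hS
  letI : Fintype S := Fintype.ofFinite S
  haveI hmax : ∀ I : S, (I : Ideal A).IsMaximal := fun I => I.2
  letI fld : ∀ I : S, Field (A ⧸ (I : Ideal A)) := fun I => Ideal.Quotient.field _
  have hbij : ∀ I : S, Function.Bijective (algebraMap ℂ (A ⧸ (I : Ideal A))) := by
    intro I
    exact ⟨(algebraMap ℂ _).injective, IsAlgClosed.algebraMap_bijective_of_isIntegral.2⟩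
  let ψ : ∀ I : S, (A ⧸ (I : Ideal A)) ≃ₐ[ℂ] ℂ :=
    fun I => (AlgEquiv.ofBijective (Algebra.ofId ℂ _) (hbij I)).symm
  let χ : ∀ I : S, A →ₐ[ℂ] ℂ :=
    fun I => (ψ I).toAlgHom.comp (Ideal.Quotient.mkₐ ℂ (I : Ideal A))
  let c : S ↪ ℂ := ((Fintype.equivFin S).toEmbedding.trans (Fin.valEmbedding)).trans
    ⟨(Nat.cast : ℕ → ℂ), Nat.cast_injective⟩
  have hcop : Pairwise (Function.onFun IsCoprime fun I : S => (I : Ideal A)) := fun I J hIJ =>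
    Ideal.isCoprime_iff_sup_eq.mpr <| (hmax I).coprime_of_ne (hmax J)
      (fun h => hIJ (Subtype.ext h))
  obtain ⟨y, hy⟩ := Ideal.quotientInfToPiQuotient_surj hcop
    (fun I => algebraMap ℂ _ (c I))
  obtain ⟨C, rfl⟩ := Ideal.Quotient.mk_surjective y
  have hC : ∀ I : S, χ I C = c I := by
    intro I
    have h1 := congrFun hy I
    rw [Ideal.quotientInfToPiQuotient_mk'] at h1
    show ψ I (Ideal.Quotient.mk _ C) = c I
    rw [h1]
    simpa using (AlgEquiv.ofBijective (Algebra.ofId ℂ (A ⧸ (I : Ideal A)))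
      (hbij I)).symm_apply_apply (c I)
  refine ⟨C, ?_⟩
  -- linear algebra: range of aeval C is everything
  let L : A →ₗ[ℂ] (S → ℂ) := LinearMap.pi (fun I => (χ I).toLinearMap)
  have hLinj : Function.Injective L := by
    rw [← LinearMap.ker_eq_bot, eq_bot_iff]
    intro a ha
    simp only [LinearMap.mem_ker, L] at ha
    have hmem : ∀ I : S, a ∈ (I : Ideal A) := by
      intro I
      have := congrFun ha I
      simp only [LinearMap.pi_apply, AlgHom.toLinearMap_apply, Pi.zero_apply] at this
      have h2 : Ideal.Quotient.mk (I : Ideal A) a = 0 := by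
        apply (ψ I).injective
        rw [map_zero]
        exact this
      exact Ideal.Quotient.eq_zero_iff_mem.mp h2
    have hjac : a ∈ Ideal.jacobson (⊥ : Ideal A) := by
      rw [Ideal.jacobson]
      exact Ideal.mem_sInf.mpr fun {J} hJ => hmem ⟨J, hJ.2⟩
    obtain ⟨n, hn⟩ := IsArtinianRing.isNilpotent_jacobson_bot (R := A)
    have : IsNilpotent a := ⟨n, by
      have := Ideal.pow_mem_pow hjac n
      rw [hn] at this
      simpa using this⟩
    simpa using IsReduced.eq_zero a this
  have hsurj : Function.Surjective
      (L ∘ₗ ((Polynomial.aeval C : Polynomial ℂ →ₐ[ℂ] A).toLinearMap)) := by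
    intro r
    refine ⟨Lagrange.interpolate Finset.univ c r, ?_⟩
    funext I
    simp only [LinearMap.comp_apply, LinearMap.pi_apply, AlgHom.toLinearMap_apply, L]
    rw [← Polynomial.aeval_algHom_apply, hC I, Polynomial.aeval_def,
      Polynomial.eval₂_eq_eval_map, Algebra.algebraMap_self, Polynomial.map_id]
    exact Lagrange.eval_interpolate_at_node r (c.injective.injOn) (Finset.mem_univ I)
  -- dimension count
  haveI : FiniteDimensional ℂ A := inferInstance
  have hd1 : Module.finrank ℂ A ≤ Fintype.card S := by
    have := LinearMap.finrank_le_finrank_of_injective hLinj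
    simpa [Module.finrank_pi] using this
  set Rg := LinearMap.range ((Polynomial.aeval C : Polynomial ℂ →ₐ[ℂ] A).toLinearMap) with hRg
  have hmap : Submodule.map L Rg = ⊤ := by
    rw [hRg, ← LinearMap.range_comp]
    exact LinearMap.range_eq_top.mpr hsurj
  have hd2 : Fintype.card S ≤ Module.finrank ℂ Rg := by
    have h1 := Submodule.finrank_map_le L Rg
    rw [hmap] at h1
    simpa [finrank_top, Module.finrank_pi] using h1
  have hd3 : Module.finrank ℂ Rg = Module.finrank ℂ A :=
    le_antisymm (Submodule.finrank_le Rg) (le_trans hd1 hd2)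
  have htop : Rg = ⊤ := Submodule.eq_top_of_finrank_eq hd3
  intro z
  have : z ∈ Rg := htop ▸ Submodule.mem_top
  obtain ⟨p, hp⟩ := this
  exact ⟨p, hp⟩



set_option synthInstance.maxHeartbeats 1000000 in
/-- a commutative unital subalgebra `Z ⊆ End(V)` consisting of
semisimple (diagonalizable) endomorphisms is generated by a single element:
there is `C ∈ Z` such that every element of `Z` is a polynomial in `C`; in
particular every eigenspace of `C` is a joint eigenspace of `Z`, so the
eigenspace decomposition for `C` coincides with the joint eigenspace
decomposition for `Z`. -/
theorem commutative_semisimple_subalgebra_monogenic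
    {V : Type*} [AddCommGroup V] [Module ℂ V] [FiniteDimensional ℂ V]
    (Z : Subalgebra ℂ (Module.End ℂ V))
    (hcomm : ∀ x ∈ Z, ∀ y ∈ Z, x * y = y * x)
    (hss : ∀ z ∈ Z, Module.End.IsSemisimple z) :
    ∃ C ∈ Z, (∀ z ∈ Z, ∃ p : Polynomial ℂ, Polynomial.aeval C p = z) ∧
      ∀ μ : ℂ, Module.End.eigenspace C μ ≠ ⊥ →
        ∃ χ : Z → ℂ, Module.End.eigenspace C μ =
          ⨅ z : Z, Module.End.eigenspace (z : Module.End ℂ V) (χ z) := by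
  classical
  haveI hfinZ : Module.Finite ℂ Z := inferInstance
  letI : CommRing Z :=
    { (inferInstance : Ring Z) with
      mul_comm := fun x y => Subtype.ext (hcomm x.1 x.2 y.1 y.2) }
  haveI : IsReduced Z := by
    constructor
    intro z hz
    obtain ⟨n, hn⟩ := hz
    have hnil : IsNilpotent (z : Module.End ℂ V) := by
      refine ⟨n, ?_⟩
      have := congrArg (Subtype.val) hn
      simpa using this
    have hz0 : (z : Module.End ℂ V) = 0 :=
      Module.End.eq_zero_of_isNilpotent_isSemisimple hnil (hss z.1 z.2)
    exact Subtype.ext hz0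
  obtain ⟨C0, hC0⟩ := aux_monogenic (A := Z)
  have hval : ∀ z : Z, ∀ p : Polynomial ℂ, Polynomial.aeval C0 p = z →
      Polynomial.aeval (C0 : Module.End ℂ V) p = (z : Module.End ℂ V) := by
    intro z q hq
    have := Polynomial.aeval_algHom_apply Z.val C0 q
    rw [hq] at this
    simpa using this
  refine ⟨C0.1, C0.2, ?_, ?_⟩
  · intro z hz
    obtain ⟨q, hq⟩ := hC0 ⟨z, hz⟩
    exact ⟨q, hval ⟨z, hz⟩ q hq⟩
  · intro μ hμ
    choose p hp using hC0
    refine ⟨fun z => (p z).eval μ, le_antisymm ?_ ?_⟩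
    · intro v hv
      simp only [Submodule.mem_iInf]
      intro z
      rw [Module.End.mem_eigenspace_iff]
      by_cases hv0 : v = 0
      · simp [hv0]
      · have h1 := Module.End.aeval_apply_of_hasEigenvector
          (f := (C0 : Module.End ℂ V)) (p := p z) (μ := μ) (x := v) ⟨hv, hv0⟩
        rw [hval z (p z) (hp z)] at h1
        exact h1
    · have hroot : ((p C0).eval μ) = μ := by
        have h0 : Polynomial.aeval (C0 : Module.End ℂ V) (p C0 - Polynomial.X) = 0 := by
          rw [map_sub, Polynomial.aeval_X, hval C0 (p C0) (hp C0), sub_self]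
        have hdvd := minpoly.dvd ℂ (C0 : Module.End ℂ V) h0
        have hev : Module.End.HasEigenvalue (C0 : Module.End ℂ V) μ := hμ
        have hr : (minpoly ℂ (C0 : Module.End ℂ V)).IsRoot μ :=
          Module.End.hasEigenvalue_iff_isRoot.mp hev
        have := hr.dvd hdvd
        simpa [sub_eq_zero, Polynomial.IsRoot] using this
      calc ⨅ z : Z, Module.End.eigenspace (z : Module.End ℂ V) ((p z).eval μ)
          ≤ Module.End.eigenspace (C0 : Module.End ℂ V) ((p C0).eval μ) := iInf_le _ C0
        _ = Module.End.eigenspace (C0 : Module.End ℂ V) μ := by rw [hroot]
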